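/- Let H ∈ (1/2, 1), T > 0, K ≥ 0, α ∈ (H − 1/2, 1], and let f : [0, T] → ℝ be bounded and satisfy |f(t) − f(s)| ≤ K·|t − s|^{α} for all s, t ∈ [0, T]. For u ∈ (0, T] define G(u) = u^{1/2−H}·f(u) + (H − 1/2)·u^{H−1/2}·∫_0^u (u^{1/2−H}·f(u) − s^{1/2−H}·f(s))·(u−s)^{−(H+1/2)} ds. Then for every u ∈ (0, T] the function s ↦ (u^{1/2−H}·f(u) − s^{1/2−H}·f(s))·(u−s)^{−(H+1/2)} is Lebesgue integrable on (0, u), and G is square integrable on (0, T): ∫_0^T G(u)² du < ∞. -/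

import Mathlib

open MeasureTheory

private lemma aux_rpow_mvt {p s u : ℝ} (hp : p < 0) (hs : 0 < s) (hsu : s < u) :
    s ^ p - u ^ p ≤ (-p) * s ^ (p - 1) * (u - s) := by
  have hus : (0:ℝ) < u - s := by linarith
  obtain ⟨c, hc, hceq⟩ := exists_hasDerivAt_eq_slope (fun x : ℝ => x ^ p)
    (fun x : ℝ => p * x ^ (p - 1)) hsu
    (ContinuousOn.rpow_const continuousOn_id fun x hx =>
      Or.inl (by have : (0:ℝ) < x := lt_of_lt_of_le hs hx.1; exact this.ne'))
    (fun x hx => Real.hasDerivAt_rpow_const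
      (Or.inl (by have : (0:ℝ) < x := hs.trans hx.1; exact this.ne')))
  rw [eq_div_iff hus.ne'] at hceq
  -- hceq : p * c ^ (p - 1) * (u - s) = u ^ p - s ^ p
  have h2 : s ^ p - u ^ p = (-p) * c ^ (p - 1) * (u - s) := by linear_combination hceq
  have hcs : c ^ (p - 1) ≤ s ^ (p - 1) :=
    Real.rpow_le_rpow_of_nonpos hs hc.1.le (by linarith)
  rw [h2]
  exact mul_le_mul_of_nonneg_right
    (mul_le_mul_of_nonneg_left hcs (by linarith)) hus.le

private lemma aux_int_rpow {u r : ℝ} (hu : 0 < u) (hr : -1 < r) :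
    IntegrableOn (fun s : ℝ => s ^ r) (Set.Ioo 0 u) ∧
      ∫ s in Set.Ioo (0:ℝ) u, s ^ r = u ^ (r + 1) / (r + 1) := by
  refine ⟨(intervalIntegral.integrableOn_Ioo_rpow_iff hu).2 hr, ?_⟩
  rw [← integral_Ioc_eq_integral_Ioo, ← intervalIntegral.integral_of_le hu.le,
    integral_rpow (Or.inl hr), Real.zero_rpow (by linarith)]
  ring

private lemma aux_int_rpow_sub {u r : ℝ} (hu : 0 < u) (hr : -1 < r) :
    IntegrableOn (fun s : ℝ => (u - s) ^ r) (Set.Ioo 0 u) ∧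
      ∫ s in Set.Ioo (0:ℝ) u, (u - s) ^ r = u ^ (r + 1) / (r + 1) := by
  have h1 : IntervalIntegrable (fun x : ℝ => x ^ r) volume 0 u :=
    intervalIntegral.intervalIntegrable_rpow' hr
  have h2 : IntervalIntegrable (fun x : ℝ => (u - x) ^ r) volume 0 u := by
    have := (h1.comp_sub_left u).symm
    simpa using this
  constructor
  · rwa [intervalIntegrable_iff_integrableOn_Ioo_of_le hu.le] at h2
  · rw [← integral_Ioc_eq_integral_Ioo, ← intervalIntegral.integral_of_le hu.le,
      intervalIntegral.integral_comp_sub_left (fun x : ℝ => x ^ r) u]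
    simp only [sub_self, sub_zero]
    rw [integral_rpow (Or.inl hr), Real.zero_rpow (by linarith)]
    ring

private lemma aux_key {p q α K Mf u T : ℝ} (f : ℝ → ℝ)
    (hp0 : p < 0) (hp1 : -1 < p) (hq : q = p - 1) (hαq : -1 < α + q)
    (hK : 0 ≤ K) (hMf : 0 ≤ Mf) (hu0 : 0 < u) (huT : u ≤ T)
    (hcf : ContinuousOn f (Set.Icc 0 T))
    (hbd : ∀ t ∈ Set.Icc (0:ℝ) T, |f t| ≤ Mf)
    (hf : ∀ s ∈ Set.Icc (0:ℝ) T, ∀ t ∈ Set.Icc (0:ℝ) T, |f t - f s| ≤ K * |t - s| ^ α) :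
    IntegrableOn (fun s : ℝ => (u ^ p * f u - s ^ p * f s) * (u - s) ^ q) (Set.Ioo 0 u) ∧
      |∫ s in Set.Ioo (0:ℝ) u, (u ^ p * f u - s ^ p * f s) * (u - s) ^ q| ≤
        K / (α + q + 1) * u ^ (α + p + q + 1) +
          (Mf * (1/2:ℝ) ^ q / (p + 1) + Mf * (-p) * (1/2:ℝ) ^ (p - 1) / (p + 1)) *
            u ^ (p + q + 1) := by
  have hq0 : q < 0 := by rw [hq]; linarith
  have hu2 : (0:ℝ) < u / 2 := by linarith
  set F : ℝ → ℝ := fun s => (u ^ p * f u - s ^ p * f s) * (u - s) ^ q with hF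
  set g : ℝ → ℝ := fun s => u ^ p * K * (u - s) ^ (α + q) + Mf * (u/2) ^ q * s ^ p
      + Mf * (-p) * (u/2) ^ (p - 1) * (u - s) ^ p with hg
  have hg1 := aux_int_rpow_sub hu0 hαq
  have hg2 := aux_int_rpow hu0 hp1
  have hg3 := aux_int_rpow_sub hu0 hp1
  have hg_int : IntegrableOn g (Set.Ioo 0 u) :=
    ((hg1.1.const_mul (u ^ p * K)).add (hg2.1.const_mul (Mf * (u/2) ^ q))).add
      (hg3.1.const_mul (Mf * (-p) * (u/2) ^ (p - 1)))
  have habs : ∀ s ∈ Set.Ioo (0:ℝ) u, |F s| ≤ g s := by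
    rintro s ⟨hs0, hsu⟩
    have hus : (0:ℝ) < u - s := by linarith
    have husq : (0:ℝ) ≤ (u - s) ^ q := Real.rpow_nonneg hus.le q
    have hup : (0:ℝ) ≤ u ^ p := Real.rpow_nonneg hu0.le p
    have hsp : (0:ℝ) ≤ s ^ p := Real.rpow_nonneg hs0.le p
    have hsmem : s ∈ Set.Icc (0:ℝ) T := ⟨hs0.le, by linarith⟩
    have humem : u ∈ Set.Icc (0:ℝ) T := ⟨hu0.le, huT⟩
    have hsp_ge : u ^ p ≤ s ^ p := Real.rpow_le_rpow_of_nonpos hs0 hsu.le hp0.le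
    have hfub : |f u - f s| ≤ K * (u - s) ^ α := by
      have h := hf s hsmem u humem
      rwa [abs_of_pos hus] at h
    have hfs : |f s| ≤ Mf := hbd s hsmem
    have hstep1 : |F s| ≤ (u ^ p * (K * (u - s) ^ α) + (s ^ p - u ^ p) * Mf) * (u - s) ^ q := by
      have e1 : F s = (u ^ p * (f u - f s) + (u ^ p - s ^ p) * f s) * (u - s) ^ q := by
        simp only [hF]; ring
      rw [e1, abs_mul, abs_of_nonneg husq]
      refine mul_le_mul_of_nonneg_right ?_ husq
      calc |u ^ p * (f u - f s) + (u ^ p - s ^ p) * f s|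
          ≤ |u ^ p * (f u - f s)| + |(u ^ p - s ^ p) * f s| := abs_add_le _ _
        _ = u ^ p * |f u - f s| + (s ^ p - u ^ p) * |f s| := by
            rw [abs_mul, abs_mul, abs_of_nonneg hup,
              abs_of_nonpos (by linarith : u ^ p - s ^ p ≤ 0)]
            ring
        _ ≤ u ^ p * (K * (u - s) ^ α) + (s ^ p - u ^ p) * Mf := by
            gcongr <;> linarith
    have hterm1 : u ^ p * (K * (u - s) ^ α) * (u - s) ^ q = u ^ p * K * (u - s) ^ (α + q) := by
      rw [Real.rpow_add hus]; ring
    have hkey2 : (s ^ p - u ^ p) * Mf * (u - s) ^ q ≤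
        Mf * (u/2) ^ q * s ^ p + Mf * (-p) * (u/2) ^ (p - 1) * (u - s) ^ p := by
      rcases le_or_gt s (u/2) with hc | hc
      · have h1 : (u - s) ^ q ≤ (u/2) ^ q :=
          Real.rpow_le_rpow_of_nonpos hu2 (by linarith) hq0.le
        have h3 : (0:ℝ) ≤ Mf * (-p) * (u/2) ^ (p - 1) * (u - s) ^ p := by
          have := Real.rpow_nonneg hu2.le (p - 1)
          have := Real.rpow_nonneg hus.le p
          have : (0:ℝ) ≤ -p := by linarith
          positivity
        calc (s ^ p - u ^ p) * Mf * (u - s) ^ q ≤ s ^ p * Mf * (u/2) ^ q := by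
              refine mul_le_mul (mul_le_mul_of_nonneg_right (by linarith) hMf) h1 husq ?_
              positivity
          _ = Mf * (u/2) ^ q * s ^ p := by ring
          _ ≤ _ := le_add_of_nonneg_right h3
      · have h1 : s ^ p - u ^ p ≤ (-p) * s ^ (p - 1) * (u - s) := aux_rpow_mvt hp0 hs0 hsu
        have h2 : s ^ (p - 1) ≤ (u/2) ^ (p - 1) :=
          Real.rpow_le_rpow_of_nonpos hu2 hc.le (by linarith)
        have h4 : (u - s) * (u - s) ^ q = (u - s) ^ p := by
          have h5 := Real.rpow_one_add' (x := u - s) hus.le (y := p - 1)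
            (show (1:ℝ) + (p - 1) ≠ 0 by intro h0; exact hp0.ne (by linarith))
          rw [hq, ← h5]
          congr 1; ring
        have h5 : s ^ p - u ^ p ≤ (-p) * (u/2) ^ (p - 1) * (u - s) :=
          h1.trans (mul_le_mul_of_nonneg_right
            (mul_le_mul_of_nonneg_left h2 (by linarith)) hus.le)
        have h6 : (0:ℝ) ≤ Mf * (u/2) ^ q * s ^ p := by
          have := Real.rpow_nonneg hu2.le q
          positivity
        calc (s ^ p - u ^ p) * Mf * (u - s) ^ q
            ≤ ((-p) * (u/2) ^ (p - 1) * (u - s)) * Mf * (u - s) ^ q :=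
              mul_le_mul_of_nonneg_right (mul_le_mul_of_nonneg_right h5 hMf) husq
          _ = Mf * (-p) * (u/2) ^ (p - 1) * ((u - s) * (u - s) ^ q) := by ring
          _ = Mf * (-p) * (u/2) ^ (p - 1) * (u - s) ^ p := by rw [h4]
          _ ≤ _ := le_add_of_nonneg_left h6
    calc |F s| ≤ (u ^ p * (K * (u - s) ^ α) + (s ^ p - u ^ p) * Mf) * (u - s) ^ q := hstep1
      _ = u ^ p * (K * (u - s) ^ α) * (u - s) ^ q + (s ^ p - u ^ p) * Mf * (u - s) ^ q := by
          ring
      _ = u ^ p * K * (u - s) ^ (α + q) + (s ^ p - u ^ p) * Mf * (u - s) ^ q := by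
          rw [hterm1]
      _ ≤ g s := by simp only [hg]; linarith
  have hFc : ContinuousOn F (Set.Ioo 0 u) := by
    simp only [hF]
    apply ContinuousOn.mul
    · refine ContinuousOn.sub continuousOn_const (ContinuousOn.mul ?_ ?_)
      · exact ContinuousOn.rpow_const continuousOn_id fun s hs => Or.inl hs.1.ne'
      · exact hcf.mono fun s hs => ⟨hs.1.le, by linarith [hs.2]⟩
    · refine ContinuousOn.rpow_const (continuousOn_const.sub continuousOn_id)
        fun s hs => Or.inl ?_
      have : (0:ℝ) < u - s := by linarith [hs.2]
      exact this.ne'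
  have hF_int : IntegrableOn F (Set.Ioo 0 u) := by
    refine Integrable.mono' hg_int (hFc.aestronglyMeasurable measurableSet_Ioo) ?_
    exact (ae_restrict_iff' measurableSet_Ioo).2 (Filter.Eventually.of_forall fun s hs => by
      simpa [Real.norm_eq_abs] using habs s hs)
  refine ⟨hF_int, ?_⟩
  have hIg : ∫ s in Set.Ioo (0:ℝ) u, g s =
      u ^ p * K * (u ^ (α + q + 1) / (α + q + 1)) +
        Mf * (u/2) ^ q * (u ^ (p + 1) / (p + 1)) +
        Mf * (-p) * (u/2) ^ (p - 1) * (u ^ (p + 1) / (p + 1)) := by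
    simp only [hg]
    have hI12 : IntegrableOn
        (fun s : ℝ => u ^ p * K * (u - s) ^ (α + q) + Mf * (u/2) ^ q * s ^ p)
        (Set.Ioo 0 u) := (hg1.1.const_mul (u ^ p * K)).add (hg2.1.const_mul (Mf * (u/2) ^ q))
    rw [integral_add hI12 (hg3.1.const_mul (Mf * (-p) * (u/2) ^ (p - 1))),
      integral_add (hg1.1.const_mul (u ^ p * K)) (hg2.1.const_mul (Mf * (u/2) ^ q)),
      integral_const_mul, integral_const_mul, integral_const_mul, hg1.2, hg2.2, hg3.2]
  have h6 : |∫ s in Set.Ioo (0:ℝ) u, F s| ≤ ∫ s in Set.Ioo (0:ℝ) u, g s := by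
    calc |∫ s in Set.Ioo (0:ℝ) u, F s| ≤ ∫ s in Set.Ioo (0:ℝ) u, |F s| := by
          simpa [Real.norm_eq_abs] using
            norm_integral_le_integral_norm (μ := volume.restrict (Set.Ioo 0 u)) F
      _ ≤ _ := setIntegral_mono_on hF_int.abs hg_int measurableSet_Ioo habs
  rw [hIg] at h6
  refine h6.trans (le_of_eq ?_)
  have h2q : (u/2:ℝ) ^ q = (1/2:ℝ) ^ q * u ^ q := by
    rw [show u/2 = (1/2:ℝ) * u by ring, Real.mul_rpow (by norm_num) hu0.le]
  have h2p : (u/2:ℝ) ^ (p - 1) = (1/2:ℝ) ^ (p - 1) * u ^ (p - 1) := by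
    rw [show u/2 = (1/2:ℝ) * u by ring, Real.mul_rpow (by norm_num) hu0.le]
  have e1 : u ^ p * u ^ (α + q + 1) = u ^ (α + p + q + 1) := by
    rw [← Real.rpow_add hu0]; congr 1; ring
  have e2 : u ^ q * u ^ (p + 1) = u ^ (p + q + 1) := by
    rw [← Real.rpow_add hu0]; congr 1; ring
  have e3 : u ^ (p - 1) * u ^ (p + 1) = u ^ (p + q + 1) := by
    rw [← Real.rpow_add hu0]; congr 1; rw [hq]; ring
  rw [h2q, h2p]
  linear_combination (K / (α + q + 1)) * e1 + (Mf * (1/2:ℝ) ^ q / (p + 1)) * e2 +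
    (Mf * (-p) * (1/2:ℝ) ^ (p - 1) / (p + 1)) * e3

theorem stmt_8 (H T K Mf α : ℝ) (hH : H ∈ Set.Ioo (1/2 : ℝ) 1) (hT : 0 < T) (hK : 0 ≤ K)
    (hα : α ∈ Set.Ioc (H - 1/2) 1)
    (f : ℝ → ℝ) (hbd : ∀ t ∈ Set.Icc (0:ℝ) T, |f t| ≤ Mf)
    (hf : ∀ s ∈ Set.Icc (0:ℝ) T, ∀ t ∈ Set.Icc (0:ℝ) T, |f t - f s| ≤ K * |t - s| ^ α)
    (G : ℝ → ℝ)
    (hG : ∀ u ∈ Set.Ioc (0:ℝ) T,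
      G u = u ^ (1/2 - H) * f u + (H - 1/2) * u ^ (H - 1/2) *
        ∫ s in Set.Ioo (0:ℝ) u,
          (u ^ (1/2 - H) * f u - s ^ (1/2 - H) * f s) * (u - s) ^ (-(H + 1/2))) :
    (∀ u ∈ Set.Ioc (0:ℝ) T,
      IntegrableOn
        (fun s : ℝ => (u ^ (1/2 - H) * f u - s ^ (1/2 - H) * f s) * (u - s) ^ (-(H + 1/2)))
        (Set.Ioo 0 u)) ∧
    (∫⁻ u in Set.Ioo (0:ℝ) T, ENNReal.ofReal ((G u) ^ 2)) < ⊤ := by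
  obtain ⟨hH1, hH2⟩ := hH
  obtain ⟨hα1, hα2⟩ := hα
  have hα0 : 0 < α := by linarith
  have hMf : 0 ≤ Mf := (abs_nonneg _).trans (hbd 0 ⟨le_refl _, hT.le⟩)
  have hcf : ContinuousOn f (Set.Icc 0 T) := by
    intro x hx
    rw [Metric.continuousWithinAt_iff]
    intro ε hε
    have hK1 : (0:ℝ) < K + 1 := by linarith
    refine ⟨(ε / (K + 1)) ^ α⁻¹, Real.rpow_pos_of_pos (by positivity) _, fun y hy hdy => ?_⟩
    have h1 : |f y - f x| ≤ K * |y - x| ^ α := hf x hx y hy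
    rw [Real.dist_eq] at hdy ⊢
    have h2 : |y - x| ^ α ≤ ((ε / (K + 1)) ^ α⁻¹) ^ α :=
      Real.rpow_le_rpow (abs_nonneg _) hdy.le hα0.le
    rw [Real.rpow_inv_rpow (by positivity) hα0.ne'] at h2
    calc |f y - f x| ≤ K * |y - x| ^ α := h1
      _ ≤ K * (ε / (K + 1)) := mul_le_mul_of_nonneg_left h2 hK
      _ < ε := by
          rw [mul_comm, div_mul_eq_mul_div, div_lt_iff₀ hK1]
          nlinarith
  have key := fun (u : ℝ) (hu : u ∈ Set.Ioc (0:ℝ) T) =>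
    aux_key (p := 1/2 - H) (q := -(H + 1/2)) (α := α) (K := K) (Mf := Mf) (u := u) (T := T) f
      (by linarith) (by linarith) (by ring) (by linarith) hK hMf hu.1 hu.2 hcf hbd hf
  refine ⟨fun u hu => (key u hu).1, ?_⟩
  obtain ⟨D, E, hD, hE, hGb⟩ : ∃ D E : ℝ, 0 ≤ D ∧ 0 ≤ E ∧
      ∀ u ∈ Set.Ioc (0:ℝ) T, |G u| ≤ D + E * u ^ (1/2 - H) := by
    have hc1 : (0:ℝ) ≤ K / (α + -(H + 1/2) + 1) := div_nonneg hK (by linarith)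
    have hc23 : (0:ℝ) ≤ Mf * (1/2:ℝ) ^ (-(H + 1/2)) / ((1/2 - H) + 1) +
        Mf * (-(1/2 - H)) * (1/2:ℝ) ^ ((1/2 - H) - 1) / ((1/2 - H) + 1) := by
      have r1 : (0:ℝ) ≤ (1/2:ℝ) ^ (-(H + 1/2)) := Real.rpow_nonneg (by norm_num) _
      have r2 : (0:ℝ) ≤ (1/2:ℝ) ^ ((1/2 - H) - 1) := Real.rpow_nonneg (by norm_num) _
      have r3 : (0:ℝ) ≤ -(1/2 - H) := by linarith
      have r4 : (0:ℝ) < (1/2 - H) + 1 := by linarith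
      positivity
    refine ⟨(H - 1/2) * (K / (α + -(H + 1/2) + 1)) * T ^ (α + -(H + 1/2) + 1),
      Mf + (H - 1/2) * (Mf * (1/2:ℝ) ^ (-(H + 1/2)) / ((1/2 - H) + 1) +
        Mf * (-(1/2 - H)) * (1/2:ℝ) ^ ((1/2 - H) - 1) / ((1/2 - H) + 1)), ?_, ?_, ?_⟩
    · have := Real.rpow_nonneg hT.le (α + -(H + 1/2) + 1)
      have h12 : (0:ℝ) ≤ H - 1/2 := by linarith
      positivity
    · have h12 : (0:ℝ) ≤ H - 1/2 := by linarith
      positivity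
    · intro u hu
      obtain ⟨hu0, huT⟩ := hu
      have h2 := (key u ⟨hu0, huT⟩).2
      rw [hG u ⟨hu0, huT⟩]
      have hup : (0:ℝ) ≤ u ^ (1/2 - H) := Real.rpow_nonneg hu0.le _
      have hup' : (0:ℝ) ≤ u ^ (H - 1/2) := Real.rpow_nonneg hu0.le _
      have eA : u ^ (H - 1/2) * u ^ (α + (1/2 - H) + -(H + 1/2) + 1) =
          u ^ (α + -(H + 1/2) + 1) := by
        rw [← Real.rpow_add hu0]; congr 1; ring
      have eB : u ^ (H - 1/2) * u ^ ((1/2 - H) + -(H + 1/2) + 1) = u ^ (1/2 - H) := by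
        rw [← Real.rpow_add hu0]; congr 1; ring
      have eC : u ^ (α + -(H + 1/2) + 1) ≤ T ^ (α + -(H + 1/2) + 1) :=
        Real.rpow_le_rpow hu0.le huT (by linarith)
      calc |u ^ (1/2 - H) * f u + (H - 1/2) * u ^ (H - 1/2) *
              ∫ s in Set.Ioo (0:ℝ) u,
                (u ^ (1/2 - H) * f u - s ^ (1/2 - H) * f s) * (u - s) ^ (-(H + 1/2))|
          ≤ u ^ (1/2 - H) * |f u| + (H - 1/2) * u ^ (H - 1/2) *
              |∫ s in Set.Ioo (0:ℝ) u,
                (u ^ (1/2 - H) * f u - s ^ (1/2 - H) * f s) * (u - s) ^ (-(H + 1/2))| := by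
            refine (abs_add_le _ _).trans (le_of_eq ?_)
            rw [abs_mul, abs_mul, abs_mul, abs_of_nonneg hup,
              abs_of_nonneg (by linarith : (0:ℝ) ≤ H - 1/2), abs_of_nonneg hup']
        _ ≤ u ^ (1/2 - H) * Mf + (H - 1/2) * u ^ (H - 1/2) *
              (K / (α + -(H + 1/2) + 1) * u ^ (α + (1/2 - H) + -(H + 1/2) + 1) +
                (Mf * (1/2:ℝ) ^ (-(H + 1/2)) / ((1/2 - H) + 1) +
                  Mf * (-(1/2 - H)) * (1/2:ℝ) ^ ((1/2 - H) - 1) / ((1/2 - H) + 1)) *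
                  u ^ ((1/2 - H) + -(H + 1/2) + 1)) := by
            gcongr <;> first
              | exact hbd u ⟨hu0.le, huT⟩
              | exact h2
              | exact mul_nonneg (by linarith) hup'
              | linarith
        _ = Mf * u ^ (1/2 - H) + (H - 1/2) * (K / (α + -(H + 1/2) + 1)) *
              (u ^ (H - 1/2) * u ^ (α + (1/2 - H) + -(H + 1/2) + 1)) +
              (H - 1/2) * (Mf * (1/2:ℝ) ^ (-(H + 1/2)) / ((1/2 - H) + 1) +
                Mf * (-(1/2 - H)) * (1/2:ℝ) ^ ((1/2 - H) - 1) / ((1/2 - H) + 1)) *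
              (u ^ (H - 1/2) * u ^ ((1/2 - H) + -(H + 1/2) + 1)) := by ring
        _ = Mf * u ^ (1/2 - H) + (H - 1/2) * (K / (α + -(H + 1/2) + 1)) *
              u ^ (α + -(H + 1/2) + 1) +
              (H - 1/2) * (Mf * (1/2:ℝ) ^ (-(H + 1/2)) / ((1/2 - H) + 1) +
                Mf * (-(1/2 - H)) * (1/2:ℝ) ^ ((1/2 - H) - 1) / ((1/2 - H) + 1)) *
              u ^ (1/2 - H) := by rw [eA, eB]
        _ ≤ _ := by
            have h12 : (0:ℝ) ≤ H - 1/2 := by linarith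
            have := mul_le_mul_of_nonneg_left eC (mul_nonneg h12 hc1)
            linarith
  have hsq : ∀ u ∈ Set.Ioo (0:ℝ) T, (G u) ^ 2 ≤ 2 * D ^ 2 + 2 * E ^ 2 * u ^ (1 - 2 * H) := by
    intro u hu
    have hb := hGb u ⟨hu.1, hu.2.le⟩
    have h0 : (0:ℝ) ≤ u ^ (1/2 - H) := Real.rpow_nonneg hu.1.le _
    have h1 : u ^ (1/2 - H) * u ^ (1/2 - H) = u ^ (1 - 2 * H) := by
      rw [← Real.rpow_add hu.1]; congr 1; ring
    have habs := abs_le.1 hb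
    nlinarith [mul_nonneg (by linarith [habs.2] : (0:ℝ) ≤ D + E * u ^ (1/2 - H) - G u)
        (by linarith [habs.1] : (0:ℝ) ≤ D + E * u ^ (1/2 - H) + G u),
      sq_nonneg (D - E * u ^ (1/2 - H)), h1]
  have hbint : IntegrableOn (fun u : ℝ => 2 * D ^ 2 + 2 * E ^ 2 * u ^ (1 - 2 * H))
      (Set.Ioo 0 T) := by
    refine Integrable.add (integrableOn_const measure_Ioo_lt_top.ne) ?_
    exact (aux_int_rpow hT (by linarith)).1.const_mul _
  calc ∫⁻ u in Set.Ioo (0:ℝ) T, ENNReal.ofReal ((G u) ^ 2)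
      ≤ ∫⁻ u in Set.Ioo (0:ℝ) T,
          ENNReal.ofReal (2 * D ^ 2 + 2 * E ^ 2 * u ^ (1 - 2 * H)) :=
        lintegral_mono_ae ((ae_restrict_iff' measurableSet_Ioo).2
          (Filter.Eventually.of_forall fun u hu => ENNReal.ofReal_le_ofReal (hsq u hu)))
    _ < ⊤ := hbint.lintegral_lt_top
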